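/- arXiv:0710.4976 — 2 statements merged into one kernel-verified Lean document; each statement's English description precedes it below -/
import Mathlib

section
/- For all integers 0 ≤ j ≤ n, the q-Stirling number of the first kind has the explicit formula s_1(n,j,q) = (q^{C(n,2)}/(q−1)^{n−j}) · Σ_{k=j}^n (−1)^{n−k} q^{C(k+1,2) − n·k} binom(n,k)_q C(k,j). (Theorem 3, first assertion.) -/
/-- The q-analogue `[n]_q = (1 - q^n)/(1 - q)` of a natural number. -/
def qnum {K : Type*} [Field K] (q : K) (n : ℕ) : K := (1 - q ^ n) / (1 - q)

/-- The q-factorial `[n]_q! = ∏_{j=1}^n [j]_q`. -/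
def qfact {K : Type*} [Field K] (q : K) (n : ℕ) : K :=
  ∏ j ∈ Finset.range n, qnum q (j + 1)

/-- The Gaussian binomial coefficient, `0` for `k > n`. -/
def qbinom {K : Type*} [Field K] (q : K) (n k : ℕ) : K :=
  if k ≤ n then qfact q n / (qfact q k * qfact q (n - k)) else 0

/-- The q-Stirling number of the first kind: the coefficient of `T^k` in
`∏_{j=0}^{n-1} (T - [j]_q)`. -/
noncomputable def qStirling1 {K : Type*} [Field K] (q : K) (n k : ℕ) : K :=
  (∏ j ∈ Finset.range n, (Polynomial.X - Polynomial.C (qnum q j))).coeff k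

open Polynomial Finset

section Choose
lemma two_mul_choose_two' : ∀ k : ℕ, 2 * Nat.choose k 2 + k = k * k
  | 0 => rfl
  | (k+1) => by
      rw [Nat.choose_succ_succ k 1, Nat.choose_one_right]
      have := two_mul_choose_two' k
      nlinarith [this]

lemma choose_two_int {m n : ℕ} (h : m ≤ n) :
    (((n - m).choose 2 : ℕ) : ℤ) =
      (n.choose 2 : ℤ) + ((((m+1).choose 2 : ℕ) : ℤ) - (n : ℤ) * m) := by
  obtain ⟨d, rfl⟩ := Nat.exists_eq_add_of_le h
  have hd : (2 : ℤ) * ((d.choose 2 : ℕ) : ℤ) = d * d - d := by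
    have := congrArg (Nat.cast : ℕ → ℤ) (two_mul_choose_two' d); push_cast at this; linarith
  have hn : (2 : ℤ) * (((m+d).choose 2 : ℕ) : ℤ) = (m+d) * (m+d) - (m+d) := by
    have := congrArg (Nat.cast : ℕ → ℤ) (two_mul_choose_two' (m+d)); push_cast at this; linarith
  have hm : (2 : ℤ) * (((m+1).choose 2 : ℕ) : ℤ) = (m+1) * (m+1) - (m+1) := by
    have := congrArg (Nat.cast : ℕ → ℤ) (two_mul_choose_two' (m+1)); push_cast at this; linarith
  have hs : m + d - m = d := by omega
  rw [hs]
  apply mul_left_cancel₀ (show (2:ℤ) ≠ 0 by norm_num)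
  push_cast at *
  linarith


end Choose

section Aux
variable {K : Type*} [Field K] {q : K}
  (hq : ∀ n : ℕ, 1 ≤ n → q ^ n ≠ 1)

include hq

lemma one_sub_q_pow_ne {k : ℕ} (hk : 1 ≤ k) : (1 : K) - q ^ k ≠ 0 := by
  rw [sub_ne_zero]; exact fun h => hq k hk h.symm

lemma one_sub_q_ne : (1 : K) - q ≠ 0 := by
  simpa using one_sub_q_pow_ne hq (k := 1) le_rfl

lemma qnum_ne_zero {k : ℕ} (hk : 1 ≤ k) : qnum q k ≠ 0 :=
  div_ne_zero (one_sub_q_pow_ne hq hk) (one_sub_q_ne hq)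

lemma qfact_ne_zero (n : ℕ) : qfact q n ≠ 0 :=
  Finset.prod_ne_zero_iff.2 fun i _ => qnum_ne_zero hq (Nat.succ_le_succ (Nat.zero_le i))

lemma qbinom_zero_right (n : ℕ) : qbinom q n 0 = 1 := by
  rw [qbinom, if_pos (Nat.zero_le n)]
  simp [qfact, div_self (qfact_ne_zero hq n), Finset.prod_range_zero]
  exact qfact_ne_zero hq n

lemma qbinom_self (n : ℕ) : qbinom q n n = 1 := by
  rw [qbinom, if_pos le_rfl]
  simp only [Nat.sub_self]
  have h0 : qfact q 0 = 1 := by simp [qfact]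
  rw [h0, mul_one, div_self (qfact_ne_zero hq n)]

omit hq in
lemma qbinom_symm {n k : ℕ} (h : k ≤ n) : qbinom q n k = qbinom q n (n - k) := by
  rw [qbinom, qbinom, if_pos h, if_pos (Nat.sub_le n k)]
  rw [Nat.sub_sub_self h, mul_comm]

omit hq in
lemma qnum_add (a b : ℕ) : qnum q (a + b) = qnum q a + q ^ a * qnum q b := by
  rw [qnum, qnum, qnum, pow_add]
  field_simp
  congr 1
  ring

omit hq in
lemma qfact_succ (n : ℕ) : qfact q (n + 1) = qfact q n * qnum q (n + 1) := by
  rw [qfact, Finset.prod_range_succ, qfact]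

lemma qbinom_pascal {s n : ℕ} (h : s ≤ n) :
    qbinom q (n+1) (s+1) = qbinom q n (s+1) + q ^ (n - s) * qbinom q n s := by
  rcases eq_or_lt_of_le h with rfl | hlt
  · rw [qbinom_self hq, qbinom_self hq, qbinom, if_neg (by omega)]
    simp
  · obtain ⟨a, rfl⟩ : ∃ a, n = s + 1 + a := ⟨n - (s+1), by omega⟩
    rw [qbinom, qbinom, qbinom, if_pos (by omega), if_pos (by omega), if_pos (by omega)]
    have e1 : s + 1 + a + 1 - (s + 1) = a + 1 := by omega
    have e2 : s + 1 + a - (s + 1) = a := by omega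
    have e3 : s + 1 + a - s = a + 1 := by omega
    rw [e1, e2, e3]
    rw [qfact_succ (s+1+a), qfact_succ a, qfact_succ s]
    have hkey : qnum q (s + 1 + a + 1) = qnum q (a+1) + q ^ (a+1) * qnum q (s+1) := by
      have := qnum_add (q := q) (a+1) (s+1)
      rw [show a + 1 + (s+1) = s + 1 + a + 1 by omega] at this
      exact this
    rw [hkey]
    have h1 := qfact_ne_zero hq (s+1)
    have h2 := qfact_ne_zero hq a
    have h3 := qfact_ne_zero hq s
    have h4 := qnum_ne_zero (q := q) hq (k := a+1) (by omega)
    have h5 := qnum_ne_zero (q := q) hq (k := s+1) (by omega)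
    field_simp


omit hq in
lemma coeff_sum_C_mul_X_pow (a : ℕ → K) (N j : ℕ) :
    (∑ m ∈ Finset.range N, C (a m) * X ^ m).coeff j = if j < N then a j else 0 := by
  rw [Polynomial.finset_sum_coeff]
  simp only [Polynomial.coeff_C_mul, Polynomial.coeff_X_pow, mul_ite, mul_one, mul_zero]
  rw [Finset.sum_ite_eq (Finset.range N) j a]
  simp [Finset.mem_range]

lemma key_prod : ∀ n : ℕ, ∏ i ∈ Finset.range n, (X + C (q ^ i)) =
    ∑ m ∈ Finset.range (n+1), C (q ^ ((n-m).choose 2) * qbinom q n (n-m)) * X ^ m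
  | 0 => by simp [qbinom_zero_right hq]
  | (n+1) => by
    rw [Finset.prod_range_succ, key_prod n]
    ext j
    rw [mul_add, Polynomial.coeff_add, Polynomial.coeff_mul_C,
      coeff_sum_C_mul_X_pow, coeff_sum_C_mul_X_pow]
    match j with
    | 0 =>
      rw [Polynomial.coeff_mul_X_zero]
      simp only [if_pos (by omega : (0:ℕ) < n+1), if_pos (by omega : (0:ℕ) < n+2)]
      rw [Nat.sub_zero, Nat.sub_zero, qbinom_self hq, qbinom_self hq]
      rw [Nat.choose_succ_succ n 1, Nat.choose_one_right, pow_add]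
      ring
    | (k+1) =>
      rw [Polynomial.coeff_mul_X, coeff_sum_C_mul_X_pow]
      by_cases hk : k + 1 < n + 2
      · rw [if_pos hk, if_pos (by omega : k < n + 1)]
        by_cases hk2 : k + 1 < n + 1
        · rw [if_pos hk2]
          -- main Pascal case : k < n
          obtain ⟨s, hs⟩ : ∃ s, n - k = s + 1 := ⟨n - k - 1, by omega⟩
          have e1 : n + 1 - (k + 1) = s + 1 := by omega
          have e2 : n - (k + 1) = s := by omega
          have e3 : n - s = k + 1 := by omega
          rw [e1, e2, hs]
          rw [qbinom_pascal hq (show s ≤ n by omega), e3]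
          rw [Nat.choose_succ_succ s 1, Nat.choose_one_right]
          have e4 : q ^ (s + s.choose 2 + (k+1)) = q ^ (s.choose 2 + n) := by
            congr 1; omega
          rw [pow_add q (s.choose 2) n] at e4
          simp only [show Nat.succ 1 = 2 from rfl]
          linear_combination - qbinom q n s * e4
        · rw [if_neg hk2, zero_mul, add_zero]
          have hk3 : k = n := by omega
          subst hk3
          rw [Nat.sub_self, show k + 1 - (k+1) = 0 from by omega,
            qbinom_zero_right hq, qbinom_zero_right hq]
      · rw [if_neg hk, if_neg (by omega : ¬ k < n + 1), if_neg (by omega : ¬ k + 1 < n + 1)]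
        simp



omit hq in
lemma coeff_Y_pow (m j : ℕ) :
    ((C (1 - q) * X - 1 : Polynomial K) ^ m).coeff j
      = (1-q)^j * (-1)^(m-j) * (m.choose j : K) := by
  have h : (C (1-q) * X - 1 : Polynomial K) ^ m
      = ∑ i ∈ Finset.range (m+1), C ((1-q)^i * (-1)^(m-i) * (m.choose i : K)) * X ^ i := by
    rw [sub_eq_add_neg, show (-1 : Polynomial K) = C (-1) from by simp, add_pow]
    refine Finset.sum_congr rfl fun i _ => ?_
    rw [mul_pow, ← C_pow, ← C_pow, ← Polynomial.C_eq_natCast]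
    rw [C_mul, C_mul]
    ring
  rw [h, coeff_sum_C_mul_X_pow]
  by_cases hj : j < m + 1
  · rw [if_pos hj]
  · rw [if_neg hj]
    have h0 : m.choose j = 0 := Nat.choose_eq_zero_of_lt (by omega)
    rw [h0]; simp

end Aux


/-- **Theorem 3, first assertion**: for `0 ≤ j ≤ n`, the q-Stirling number of the
first kind has the explicit formula
`s_1(n,j,q) = (q^{C(n,2)}/(q-1)^{n-j}) Σ_{k=j}^n (-1)^{n-k} q^{C(k+1,2)-nk} binom(n,k)_q C(k,j)`. -/
theorem qStirling1_explicit
    {K : Type*} [Field K] [CharZero K] (q : K) (hq0 : q ≠ 0)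
    (hq : ∀ n : ℕ, 1 ≤ n → q ^ n ≠ 1) (n j : ℕ) (hj : j ≤ n) :
    qStirling1 q n j = q ^ Nat.choose n 2 / (q - 1) ^ (n - j) *
      ∑ k ∈ Finset.Icc j n, (-1 : K) ^ (n - k) *
        q ^ ((Nat.choose (k + 1) 2 : ℤ) - (n : ℤ) * (k : ℤ)) *
        qbinom q n k * (Nat.choose k j : K) := by
  have h1q : (1 : K) - q ≠ 0 := one_sub_q_ne hq
  set Y : Polynomial K := C (1 - q) * X - 1 with hY
  -- Claim A
  have hA : C ((1-q)^n) * ∏ i ∈ Finset.range n, (X - C (qnum q i))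
      = ∏ i ∈ Finset.range n, (Y + C (q^i)) := by
    have hc : (C ((1-q)^n) : Polynomial K) = ∏ _i ∈ Finset.range n, C (1-q) := by
      rw [Finset.prod_const, Finset.card_range, ← C_pow]
    rw [hc, ← Finset.prod_mul_distrib]
    refine Finset.prod_congr rfl fun i _ => ?_
    have hnum : (1 - q) * qnum q i = 1 - q ^ i := by
      rw [qnum]; field_simp
    rw [mul_sub, ← C_mul, hnum, hY]
    simp only [map_sub, C_1]
    ring
  -- Claim B : aeval of key_prod
  have hB : ∏ i ∈ Finset.range n, (Y + C (q^i))
      = ∑ m ∈ Finset.range (n+1), C (q ^ ((n-m).choose 2) * qbinom q n (n-m)) * Y ^ m := by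
    have := congrArg (Polynomial.aeval Y) (key_prod hq n)
    simpa only [map_prod, map_sum, map_mul, map_add, map_pow, Polynomial.aeval_X,
      Polynomial.aeval_C, Polynomial.algebraMap_eq] using this
  -- coefficient extraction
  have hC : (1-q)^n * qStirling1 q n j
      = ∑ m ∈ Finset.range (n+1), (q ^ ((n-m).choose 2) * qbinom q n (n-m))
          * ((1-q)^j * (-1)^(m-j) * (m.choose j : K)) := by
    have h := congrArg (fun p => Polynomial.coeff p j) (hA.trans hB)
    simp only [Polynomial.finset_sum_coeff, Polynomial.coeff_C_mul] at h
    rw [qStirling1]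
    simp only [hY, coeff_Y_pow] at h
    exact h
  -- restrict the sum
  have hD : (1-q)^n * qStirling1 q n j
      = ∑ m ∈ Finset.Icc j n, (q ^ ((n-m).choose 2) * qbinom q n (n-m))
          * ((1-q)^j * (-1)^(m-j) * (m.choose j : K)) := by
    rw [hC]
    refine (Finset.sum_subset (fun x hx => by
      simp only [Finset.mem_Icc] at hx; exact Finset.mem_range.2 (by omega)) ?_).symm
    intro x hx hxo
    simp only [Finset.mem_range] at hx
    simp only [Finset.mem_Icc, not_and, not_le] at hxo
    have : x < j := by omega
    rw [Nat.choose_eq_zero_of_lt this]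
    simp
  -- per-term identification
  have hE : ∀ m ∈ Finset.Icc j n,
      (q ^ ((n-m).choose 2) * qbinom q n (n-m))
          * ((1-q)^j * (-1)^(m-j) * (m.choose j : K))
      = (1-q)^n * ((q ^ Nat.choose n 2 / (q - 1) ^ (n - j)) *
          ((-1 : K) ^ (n - m) * q ^ ((Nat.choose (m + 1) 2 : ℤ) - (n : ℤ) * (m : ℤ)) *
            qbinom q n m * (Nat.choose m j : K))) := by
    intro m hm
    simp only [Finset.mem_Icc] at hm
    obtain ⟨hjm, hmn⟩ := hm
    have e1 : qbinom q n (n - m) = qbinom q n m := (qbinom_symm hmn).symm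
    have e2 : (q : K) ^ ((n-m).choose 2)
        = q ^ (n.choose 2) * q ^ ((Nat.choose (m + 1) 2 : ℤ) - (n : ℤ) * (m : ℤ)) := by
      rw [← zpow_natCast q ((n-m).choose 2), choose_two_int hmn, zpow_add₀ hq0, zpow_natCast]
    have e3 : ((-1 : K)) ^ (m - j) = (-1)^(n-m) * (-1)^(n-j) := by
      rw [← pow_add, show (n-m)+(n-j) = (m-j) + 2*(n-m) from by omega, pow_add, pow_mul]
      simp
    have e4 : ((1:K) - q)^n = (1-q)^(n-j) * (1-q)^j := by
      rw [← pow_add]; congr 1; omega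
    have e5 : (q - 1 : K)^(n-j) = (-1)^(n-j) * (1-q)^(n-j) := by
      rw [show (q - 1 : K) = -1 * (1 - q) from by ring, mul_pow]
    rw [e1, e2, e3, e4, e5]
    have hne : ((1:K)-q)^(n-j) ≠ 0 := pow_ne_zero _ h1q
    have hsq : ((-1 : K))^(n-j) * ((-1 : K))^(n-j) = 1 := by
      rw [← pow_add, ← two_mul, pow_mul, neg_one_sq, one_pow]
    field_simp
    linear_combination (qbinom q n m *
      (m.choose j : K)) * hsq
  -- finish
  have hne : ((1:K)-q)^n ≠ 0 := pow_ne_zero _ h1q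
  apply mul_left_cancel₀ hne
  rw [hD, Finset.sum_congr rfl hE, ← Finset.mul_sum, ← Finset.mul_sum]
end

section
/- For every n ∈ ℕ one has 1/[n+1]_q = ((−1)^n/[n]_q!) · Σ_{k=0}^n s_1(n,k,q) β_{k,q}. (Theorem 3, second assertion, with signs and powers of q made consistent with the signed definition of s_1 and the corrected value (−1)^n q^{n−C(n+1,2)}/[n+1]_q of ∫ binom(x,n)_q dμ_q.) -/
open Polynomial Finset

/-- The umbral linear functional sending `T^k ↦ β k`. -/
noncomputable def Lmap {K : Type*} [Field K] (β : ℕ → K) : K[X] →ₗ[K] K where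
  toFun f := f.sum fun k a => a * β k
  map_add' p r := Polynomial.sum_add_index p r _ (fun _ => zero_mul _) (fun _ a b => add_mul a b _)
  map_smul' c p := by
    simp only [RingHom.id_apply, smul_eq_mul]
    rw [Polynomial.sum_smul_index p c (fun k a => a * β k) (fun _ => zero_mul _),
      Polynomial.sum_def, Polynomial.sum_def, Finset.mul_sum]
    simp [mul_assoc]

lemma Lmap_monomial {K : Type*} [Field K] (β : ℕ → K) (n : ℕ) (a : K) :
    Lmap β (monomial n a) = a * β n := by
  show (monomial n a).sum (fun k a => a * β k) = a * β n
  exact Polynomial.sum_monomial_index a (fun k a => a * β k) (zero_mul _)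

lemma Lmap_eq_sum {K : Type*} [Field K] (β : ℕ → K) (f : K[X]) (N : ℕ) (h : f.natDegree < N) :
    Lmap β f = ∑ k ∈ Finset.range N, f.coeff k * β k := by
  show f.sum (fun k a => a * β k) = _
  exact Polynomial.sum_over_range' (f := fun k a => a * β k) f (fun _ => zero_mul _) N h

lemma Lmap_C_mul {K : Type*} [Field K] (β : ℕ → K) (c : K) (f : K[X]) :
    Lmap β (C c * f) = c * Lmap β f := by
  rw [← smul_eq_C_mul, map_smul, smul_eq_mul]

/-- The functional equation `q·L(f(qT+1)) − L(f) = (q−1)f₀ + f₁` coming from the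
Carlitz recursion. -/
lemma Lmap_key {K : Type*} [Field K] (q : K) (β : ℕ → K) (hβ0 : β 0 = 1)
    (hβ : ∀ k : ℕ, 1 ≤ k →
      q * ∑ i ∈ Finset.range (k + 1), (Nat.choose k i : K) * q ^ i * β i - β k =
        if k = 1 then 1 else 0)
    (f : K[X]) :
    q * Lmap β (f.comp (C q * X + 1)) - Lmap β f
      = (q - 1) * f.coeff 0 + f.coeff 1 := by
  induction f using Polynomial.induction_on' with
  | add p r hp hr =>
    rw [add_comp, map_add, map_add, coeff_add, coeff_add]
    linear_combination hp + hr
  | monomial n a =>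
    have hpow : ((C q * X + 1 : K[X])) ^ n
        = ∑ m ∈ range (n + 1), monomial m (q ^ m * (n.choose m : K)) := by
      rw [add_pow]
      refine Finset.sum_congr rfl fun m _ => ?_
      rw [mul_pow, ← C_pow, one_pow, mul_one, ← C_mul_X_pow_eq_monomial, C_mul, map_natCast]
      ring
    have hL : Lmap β ((monomial n a).comp (C q * X + 1))
        = a * ∑ m ∈ range (n + 1), (n.choose m : K) * q ^ m * β m := by
      rw [← C_mul_X_pow_eq_monomial, mul_comp, C_comp, X_pow_comp, Lmap_C_mul, hpow, map_sum]
      simp only [Lmap_monomial]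
      congr 1
      exact Finset.sum_congr rfl fun m _ => by ring
    rw [hL, Lmap_monomial, coeff_monomial, coeff_monomial]
    rcases Nat.eq_zero_or_pos n with h0 | h1
    · subst h0
      simp [hβ0]
      ring
    · have h := hβ n h1
      rw [if_neg (by omega : ¬ n = 0)]
      by_cases hn1 : n = 1
      · subst hn1
        rw [if_pos rfl]
        rw [if_pos rfl] at h
        linear_combination a * h
      · rw [if_neg hn1]
        rw [if_neg hn1] at h
        linear_combination a * h

/-- The q-falling-factorial polynomial `∏_{j<n} (T − [j]_q)`. -/
noncomputable def Pp {K : Type*} [Field K] (q : K) (n : ℕ) : K[X] :=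
  ∏ j ∈ Finset.range n, (X - C (qnum q j))

section
variable {K : Type*} [Field K] (q : K)

lemma qnum_zero : qnum q 0 = 0 := by simp [qnum]

lemma qnum_succ (hq1 : q ≠ 1) (j : ℕ) : qnum q (j + 1) = q * qnum q j + 1 := by
  have h : (1 : K) - q ≠ 0 := sub_ne_zero.mpr (Ne.symm hq1)
  rw [qnum, qnum]
  field_simp
  ring

lemma qnum_one (hq1 : q ≠ 1) : qnum q 1 = 1 := by
  have h : (1 : K) - q ≠ 0 := sub_ne_zero.mpr (Ne.symm hq1)
  simp [qnum, div_self h]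

lemma Pp_zero : Pp q 0 = (1 : K[X]) := Finset.prod_range_zero _

lemma Pp_succ (n : ℕ) : Pp q (n + 1) = Pp q n * (X - C (qnum q n)) :=
  Finset.prod_range_succ _ _

lemma Pp_comp (hq1 : q ≠ 1) (n : ℕ) :
    (Pp q (n + 1)).comp (C q * X + 1) = C (q ^ n) * ((C q * X + 1) * Pp q n) := by
  induction n with
  | zero => simp [Pp, qnum_zero]
  | succ n ih =>
    have hfac : ((X : K[X]) - C (qnum q (n + 1))).comp (C q * X + 1)
        = C q * (X - C (qnum q n)) := by
      rw [sub_comp, X_comp, C_comp, qnum_succ q hq1, C_add, C_mul, C_1]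
      ring
    rw [Pp_succ, mul_comp, ih, hfac, Pp_succ, pow_succ, C_mul]
    ring

lemma Pp_factor (n : ℕ) :
    Pp q (n + 1) = (∏ j ∈ Finset.range n, (X - C (qnum q (j + 1)))) * X := by
  rw [Pp, Finset.prod_range_succ']
  simp [qnum_zero]

lemma Pp_coeff_zero (n : ℕ) : (Pp q (n + 1)).coeff 0 = 0 := by
  rw [Pp_factor, coeff_zero_eq_eval_zero]
  simp

lemma Pp_coeff_one (n : ℕ) : (Pp q (n + 1)).coeff 1 = (-1 : K) ^ n * qfact q n := by
  rw [Pp_factor, coeff_mul_X, coeff_zero_eq_eval_zero, eval_prod]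
  simp only [eval_sub, eval_X, eval_C, zero_sub]
  rw [qfact, show ∀ s : Finset ℕ, ∀ f : ℕ → K, ∏ j ∈ s, -f j = (-1)^s.card * ∏ j ∈ s, f j
    from fun s f => by rw [← Finset.prod_const, ← Finset.prod_mul_distrib]; simp]
  simp

lemma Pp_natDegree_le (n : ℕ) : (Pp q n).natDegree ≤ n := by
  refine le_trans (Polynomial.natDegree_prod_le _ _) ?_
  simp [natDegree_X_sub_C]

/-- The value of the umbral functional on the q-falling factorials:
`L(P_n) = (−1)^n [n]_q! / [n+1]_q`. -/
lemma Lmap_Pp (hq : ∀ n : ℕ, 1 ≤ n → q ^ n ≠ 1)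
    (β : ℕ → K) (hβ0 : β 0 = 1)
    (hβ : ∀ k : ℕ, 1 ≤ k →
      q * ∑ i ∈ Finset.range (k + 1), (Nat.choose k i : K) * q ^ i * β i - β k =
        if k = 1 then 1 else 0) :
    ∀ n : ℕ, Lmap β (Pp q n) = (-1 : K) ^ n * qfact q n / qnum q (n + 1) := by
  have hq1 : q ≠ 1 := by simpa using hq 1 le_rfl
  have h1q : (1 : K) - q ≠ 0 := sub_ne_zero.mpr (Ne.symm hq1)
  intro n
  induction n with
  | zero =>
    rw [Pp_zero, show ((1 : K[X])) = monomial 0 1 from (monomial_zero_one).symm,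
      Lmap_monomial, hβ0, qnum_one q hq1]
    norm_num [qfact]
  | succ n ih =>
    have hden : q ^ (n + 2) - 1 ≠ 0 := sub_ne_zero.mpr (hq (n + 2) (by omega))
    have hk := Lmap_key q β hβ0 hβ (Pp q (n + 1))
    rw [Pp_comp q hq1, Pp_coeff_zero, Pp_coeff_one, Lmap_C_mul,
      show (C q * X + 1) * Pp q n = C q * (X * Pp q n) + Pp q n by ring,
      map_add, Lmap_C_mul] at hk
    have ht : Lmap β (X * Pp q n)
        = Lmap β (Pp q (n + 1)) + qnum q n * Lmap β (Pp q n) := by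
      rw [Pp_succ, show Pp q n * (X - C (qnum q n))
        = X * Pp q n - C (qnum q n) * Pp q n by ring, map_sub, Lmap_C_mul]
      ring
    rw [ht] at hk
    have hA : Lmap β (Pp q (n + 1))
        = ((-1 : K) ^ n * qfact q n
            - q ^ (n + 1) * (q * qnum q n + 1) * Lmap β (Pp q n)) / (q ^ (n + 2) - 1) := by
      rw [eq_div_iff hden]
      linear_combination hk
    rw [hA, ih, ← qnum_succ q hq1 n]
    have h1 : (1 : K) - q ^ (n + 1) ≠ 0 := sub_ne_zero.mpr (Ne.symm (hq (n + 1) (by omega)))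
    have h2 : (1 : K) - q ^ (n + 2) ≠ 0 := sub_ne_zero.mpr (Ne.symm (hq (n + 2) (by omega)))
    rw [show qfact q (n + 1) = qfact q n * qnum q (n + 1) from Finset.prod_range_succ _ _]
    simp only [qnum]
    field_simp
    ring

end

/-- **Theorem 3, second assertion** (signs corrected): for the Carlitz q-Bernoulli
numbers `β_k`, one has `1/[n+1]_q = ((-1)^n/[n]_q!) Σ_{k=0}^n s_1(n,k,q) β_k`. -/
theorem one_div_qnum_succ_eq_sum_qStirling1_mul_qBernoulli
    {K : Type*} [Field K] [CharZero K] (q : K) (hq0 : q ≠ 0)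
    (hq : ∀ n : ℕ, 1 ≤ n → q ^ n ≠ 1)
    (β : ℕ → K) (hβ0 : β 0 = 1)
    (hβ : ∀ k : ℕ, 1 ≤ k →
      q * ∑ i ∈ Finset.range (k + 1), (Nat.choose k i : K) * q ^ i * β i - β k =
        if k = 1 then 1 else 0)
    (n : ℕ) :
    1 / qnum q (n + 1) = ((-1 : K) ^ n / qfact q n) *
      ∑ k ∈ Finset.range (n + 1), qStirling1 q n k * β k := by
  have hq1 : q ≠ 1 := by simpa using hq 1 le_rfl
  have h1q : (1 : K) - q ≠ 0 := sub_ne_zero.mpr (Ne.symm hq1)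
  have hsum : ∑ k ∈ Finset.range (n + 1), qStirling1 q n k * β k = Lmap β (Pp q n) := by
    rw [Lmap_eq_sum β (Pp q n) (n + 1) (lt_of_le_of_lt (Pp_natDegree_le q n) (Nat.lt_succ_self n))]
    rfl
  rw [hsum, Lmap_Pp q hq β hβ0 hβ n]
  have hfne : qfact q n ≠ 0 := by
    refine Finset.prod_ne_zero_iff.mpr fun j _ => ?_
    exact div_ne_zero (sub_ne_zero.mpr (Ne.symm (hq (j + 1) (by omega)))) h1q
  have hqn : qnum q (n + 1) ≠ 0 :=
    div_ne_zero (sub_ne_zero.mpr (Ne.symm (hq (n + 1) (by omega)))) h1q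
  field_simp
  rw [← pow_mul, mul_comm, pow_mul]
  norm_num
end
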